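/- Bound on the target–proposal ratio: with the notation of the context, fix z ∈ ℝ^d and y ∈ ℝ^m, and define the unnormalized target p(x) := exp(−(1/2)·(y − H·x)^⊤·R^{-1}·(y − H·x)) · 𝒩(z, Q)(x) and the proposal q(x) := 𝒩(m_t, Σ_t)(x) with m_t := z + K_t·(y − H·z). Then Σ^{-1} − Σ_t^{-1} is symmetric positive semidefinite and there exists u ∈ ℝ^d such that for every x ∈ ℝ^d: p(x)/q(x) ≤ (det Σ_t / det Q)^{1/2} · exp(−(1/2)·(x − u)^⊤·(Σ^{-1} − Σ_t^{-1})·(x − u)). -/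

import Mathlib

open Matrix

section Helpers

open RealInnerProductSpace

private lemma mulVec_dot' {α β : Type*} [Fintype α] [Fintype β]
    (A : Matrix α β ℝ) (u : β → ℝ) (w : α → ℝ) :
    (A *ᵥ u) ⬝ᵥ w = u ⬝ᵥ (Aᵀ *ᵥ w) := by
  rw [dotProduct_comm, dotProduct_mulVec, ← mulVec_transpose, dotProduct_comm]

private lemma exists_mulVec_eq' {d : ℕ} (G : Matrix (Fin d) (Fin d) ℝ) (hG : Gᵀ = G)
    (c : Fin d → ℝ) (hc : ∀ v, G.mulVec v = 0 → c ⬝ᵥ v = 0) :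
    ∃ M, G.mulVec M = c := by
  let E := EuclideanSpace ℝ (Fin d)
  let T : E →ₗ[ℝ] E :=
    { toFun := fun x => WithLp.toLp 2 (G.mulVec x.ofLp)
      map_add' := fun a b => congrArg (WithLp.toLp 2) (Matrix.mulVec_add G a.ofLp b.ofLp)
      map_smul' := fun r a => congrArg (WithLp.toLp 2) (Matrix.mulVec_smul G r a.ofLp) }
  have hdot : ∀ a b : E, ⟪a, b⟫ = (a : Fin d → ℝ) ⬝ᵥ (b : Fin d → ℝ) := by
    intro a b
    rw [PiLp.inner_apply]
    simp [RCLike.inner_apply, dotProduct, mul_comm]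
  have hsym : ∀ a b : E, ⟪T a, b⟫ = ⟪a, T b⟫ := by
    intro a b
    rw [hdot, hdot]
    show (G *ᵥ a.ofLp) ⬝ᵥ b.ofLp = a.ofLp ⬝ᵥ (G *ᵥ b.ofLp)
    rw [Matrix.dotProduct_mulVec, ← Matrix.vecMul_transpose, hG]
  have hrange : LinearMap.range T = (LinearMap.ker T)ᗮ := by
    apply Submodule.eq_of_le_of_finrank_eq
    · rintro _ ⟨a, rfl⟩
      intro b hb
      rw [real_inner_comm, hsym]
      have hb' : T b = 0 := hb
      rw [hb', inner_zero_right]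
    · have h1 := LinearMap.finrank_range_add_finrank_ker T
      have h2 := Submodule.finrank_add_finrank_orthogonal (K := LinearMap.ker T)
      have hEd : Module.finrank ℝ E = d := by simp [E]
      omega
  have hcmem : (WithLp.toLp 2 c : E) ∈ (LinearMap.ker T)ᗮ := by
    intro b hb
    rw [real_inner_comm, hdot]
    have hb' : T b = 0 := hb
    exact hc b.ofLp (congrArg WithLp.ofLp hb')
  rw [← hrange] at hcmem
  obtain ⟨M, hM⟩ := hcmem
  exact ⟨M.ofLp, congrArg WithLp.ofLp hM⟩

end Helpers

/-- The Gaussian density `𝒩(μ, C)(x)` on `ℝ^d` with mean `μ` and (symmetric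
positive definite) covariance matrix `C`. -/
noncomputable def gaussDensity {d : ℕ} (μ : Fin d → ℝ)
    (C : Matrix (Fin d) (Fin d) ℝ) (x : Fin d → ℝ) : ℝ :=
  (2 * Real.pi) ^ (-(d : ℝ) / 2) * C.det ^ (-(1 : ℝ) / 2) *
    Real.exp (-(1 / 2) * ((x - μ) ⬝ᵥ C⁻¹.mulVec (x - μ)))

set_option maxHeartbeats 2000000 in
/-- Bound on the target–proposal ratio: with the EnKF
matrices as in the context, the unnormalized target
`p(x) = exp(−½|y − Hx|²_R)·𝒩(z,Q)(x)` and the proposal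
`q(x) = 𝒩(z + K_t(y − Hz), Σ_t)(x)` satisfy: `Σ⁻¹ − Σ_t⁻¹` is symmetric
positive semidefinite and there exists `u` such that for all `x`,
`p(x)/q(x) ≤ (det Σ_t/det Q)^{1/2}·exp(−½ (x−u)ᵀ(Σ⁻¹ − Σ_t⁻¹)(x−u))`. -/
theorem target_proposal_ratio_bound
    {d m : ℕ} (hd : 1 ≤ d) (hm : 1 ≤ m)
    (H : Matrix (Fin m) (Fin d) ℝ)
    (Q Qt : Matrix (Fin d) (Fin d) ℝ) (R : Matrix (Fin m) (Fin m) ℝ)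
    (hQ : Q.PosDef) (hQt : Qt.PosDef) (hR : R.PosDef)
    (hQtQ : (Qt - Q).PosSemidef)
    (S St : Matrix (Fin m) (Fin m) ℝ)
    (hS : S = H * Q * Hᵀ + R) (hSt : St = H * Qt * Hᵀ + R)
    (K Kt : Matrix (Fin d) (Fin m) ℝ)
    (hK : K = Q * Hᵀ * S⁻¹) (hKt : Kt = Qt * Hᵀ * St⁻¹)
    (Sig Sigt : Matrix (Fin d) (Fin d) ℝ)
    (hSig : Sig = (1 - K * H) * Q * (1 - K * H)ᵀ + K * R * Kᵀ)
    (hSigt : Sigt = (1 - Kt * H) * Q * (1 - Kt * H)ᵀ + Kt * R * Ktᵀ)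
    (z : Fin d → ℝ) (y : Fin m → ℝ)
    (ptar qprop : (Fin d → ℝ) → ℝ)
    (hptar : ∀ x, ptar x =
      Real.exp (-(1 / 2) * ((y - H.mulVec x) ⬝ᵥ R⁻¹.mulVec (y - H.mulVec x)))
        * gaussDensity z Q x)
    (hqprop : ∀ x, qprop x = gaussDensity (z + Kt.mulVec (y - H.mulVec z)) Sigt x) :
    (Sig⁻¹ - Sigt⁻¹).PosSemidef ∧
    ∃ u : Fin d → ℝ, ∀ x, ptar x / qprop x ≤
      (Sigt.det / Q.det) ^ ((1 : ℝ) / 2) *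
        Real.exp (-(1 / 2) * ((x - u) ⬝ᵥ (Sig⁻¹ - Sigt⁻¹).mulVec (x - u))) := by
  have hQs : Qᵀ = Q := by rw [← conjTranspose_eq_transpose_of_trivial]; exact hQ.isHermitian
  have hRs : Rᵀ = R := by rw [← conjTranspose_eq_transpose_of_trivial]; exact hR.isHermitian
  have hS' : S.PosDef := by
    rw [hS]
    have h1 : (H * Q * Hᵀ).PosSemidef := by
      have := hQ.posSemidef.mul_mul_conjTranspose_same H
      rwa [conjTranspose_eq_transpose_of_trivial] at this
    exact hR.posSemidef_add h1
  have hSt' : St.PosDef := by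
    rw [hSt]
    have h1 : (H * Qt * Hᵀ).PosSemidef := by
      have := hQt.posSemidef.mul_mul_conjTranspose_same H
      rwa [conjTranspose_eq_transpose_of_trivial] at this
    exact hR.posSemidef_add h1
  have hSdet : IsUnit S.det := isUnit_iff_ne_zero.mpr (ne_of_gt hS'.det_pos)
  have hStdet : IsUnit St.det := isUnit_iff_ne_zero.mpr (ne_of_gt hSt'.det_pos)
  have hRdet : IsUnit R.det := isUnit_iff_ne_zero.mpr (ne_of_gt hR.det_pos)
  have hQdet : IsUnit Q.det := isUnit_iff_ne_zero.mpr (ne_of_gt hQ.det_pos)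
  have hSs : Sᵀ = S := by rw [← conjTranspose_eq_transpose_of_trivial]; exact hS'.isHermitian
  have hSis : (S⁻¹)ᵀ = S⁻¹ := by rw [transpose_nonsing_inv, hSs]
  have hRis : (R⁻¹)ᵀ = R⁻¹ := by rw [transpose_nonsing_inv, hRs]
  -- substitutions
  have hKS : K * S = Q * Hᵀ := by
    rw [hK, Matrix.mul_assoc, nonsing_inv_mul S hSdet, Matrix.mul_one]
  have hHQ : H * Q = S * Kᵀ := by
    have h := congrArg transpose hKS
    rw [transpose_mul, transpose_mul, hQs, transpose_transpose, hSs] at h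
    exact h.symm
  have hHQH : H * Q * Hᵀ = S - R := by rw [hS]; abel
  have tKS : ∀ (n : ℕ) (X : Matrix (Fin m) (Fin n) ℝ), K * (S * X) = Q * (Hᵀ * X) := by
    intro n X; rw [← Matrix.mul_assoc K S X, hKS, Matrix.mul_assoc]
  have tHQH : ∀ (n : ℕ) (X : Matrix (Fin m) (Fin n) ℝ),
      H * (Q * (Hᵀ * X)) = S * X - R * X := by
    intro n X
    rw [← Matrix.mul_assoc Q Hᵀ X, ← Matrix.mul_assoc H (Q * Hᵀ) X, ← Matrix.mul_assoc H Q Hᵀ,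
      hHQH, Matrix.sub_mul]
  have tRRi : ∀ (n : ℕ) (X : Matrix (Fin m) (Fin n) ℝ), R * (R⁻¹ * X) = X := by
    intro n X; rw [← Matrix.mul_assoc, mul_nonsing_inv R hRdet, Matrix.one_mul]
  have tQiQ : ∀ (n : ℕ) (X : Matrix (Fin d) (Fin n) ℝ), Q⁻¹ * (Q * X) = X := by
    intro n X; rw [← Matrix.mul_assoc, nonsing_inv_mul Q hQdet, Matrix.one_mul]
  -- Sig = Q - K*(H*Q)
  have hSigQ : Sig = Q - K * (H * Q) := by
    rw [hSig]
    simp only [transpose_sub, transpose_one, transpose_mul, Matrix.mul_sub, Matrix.sub_mul,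
      Matrix.mul_one, Matrix.one_mul, Matrix.mul_assoc, hQs]
    rw [tHQH d Kᵀ, Matrix.mul_sub, tKS d Kᵀ]
    abel
  -- Sig * (Q⁻¹ + Hᵀ R⁻¹ H) = 1
  have hN : Sig * (Q⁻¹ + Hᵀ * R⁻¹ * H) = 1 := by
    rw [hSigQ]
    simp only [Matrix.mul_add, Matrix.add_mul, Matrix.sub_mul, Matrix.mul_sub,
      Matrix.mul_assoc]
    rw [mul_nonsing_inv Q hQdet]
    simp only [Matrix.mul_one]
    rw [tHQH d (R⁻¹ * H), Matrix.mul_sub, tKS d (R⁻¹ * H), tRRi d H]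
    abel
  have hNPD : (Q⁻¹ + Hᵀ * R⁻¹ * H).PosDef := by
    have h1 : (Hᵀ * R⁻¹ * H).PosSemidef := by
      have := hR.inv.posSemidef.conjTranspose_mul_mul_same H
      rwa [conjTranspose_eq_transpose_of_trivial] at this
    exact hQ.inv.add_posSemidef h1
  have hSigInv : Sig⁻¹ = Q⁻¹ + Hᵀ * R⁻¹ * H := inv_eq_right_inv hN
  have hSig' : Sig.PosDef := by
    have h2 : (Q⁻¹ + Hᵀ * R⁻¹ * H)⁻¹ = Sig := inv_eq_left_inv hN
    rw [← h2]; exact hNPD.inv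
  have hSigdet : IsUnit Sig.det := isUnit_iff_ne_zero.mpr (ne_of_gt hSig'.det_pos)
  have hSigs : Sigᵀ = Sig := by
    rw [← conjTranspose_eq_transpose_of_trivial]; exact hSig'.isHermitian
  have hSigis : (Sig⁻¹)ᵀ = Sig⁻¹ := by rw [transpose_nonsing_inv, hSigs]
  -- H * K = 1 - R * S⁻¹
  have hHK : H * K = 1 - R * S⁻¹ := by
    rw [hK, ← Matrix.mul_assoc, ← Matrix.mul_assoc, hHQH, Matrix.sub_mul,
      mul_nonsing_inv S hSdet]
  -- Sig⁻¹ * K = Hᵀ * R⁻¹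
  have hSinvK : Sig⁻¹ * K = Hᵀ * R⁻¹ := by
    rw [hSigInv, Matrix.add_mul]
    rw [hK]
    simp only [Matrix.mul_assoc]
    rw [tQiQ m (Hᵀ * S⁻¹)]
    rw [← Matrix.mul_assoc Q Hᵀ S⁻¹, ← Matrix.mul_assoc H (Q * Hᵀ) S⁻¹,
      ← Matrix.mul_assoc H Q Hᵀ, hHQH, Matrix.sub_mul, mul_nonsing_inv S hSdet]
    rw [Matrix.mul_sub, Matrix.mul_sub, Matrix.mul_one]
    rw [← Matrix.mul_assoc R⁻¹ R S⁻¹, nonsing_inv_mul R hRdet, Matrix.one_mul]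
    abel
  -- Kᵀ * Sig⁻¹ * K = R⁻¹ - S⁻¹
  have hKSK : Kᵀ * Sig⁻¹ * K = R⁻¹ - S⁻¹ := by
    rw [Matrix.mul_assoc, hSinvK, ← Matrix.mul_assoc]
    have h : Kᵀ * Hᵀ = 1 - S⁻¹ * R := by
      have h2 := congrArg transpose hHK
      rw [transpose_mul, transpose_sub, transpose_one, transpose_mul, hSis, hRs] at h2
      exact h2
    rw [h, Matrix.sub_mul, Matrix.one_mul, Matrix.mul_assoc,
      mul_nonsing_inv R hRdet, Matrix.mul_one]
  -- Sigt = Sig + D S Dᵀ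
  have hG : Sigt = Sig + (Kt - K) * S * (Kt - K)ᵀ := by
    rw [hSigt, hSigQ]
    simp only [transpose_sub, transpose_one, transpose_mul, Matrix.mul_sub, Matrix.sub_mul,
      Matrix.mul_add, Matrix.add_mul, Matrix.mul_one, Matrix.one_mul, Matrix.mul_assoc, hQs]
    rw [tHQH d Ktᵀ, hHQ, Matrix.mul_sub, ← tKS d Ktᵀ]
    abel
  have hGPSD : ((Kt - K) * S * (Kt - K)ᵀ).PosSemidef := by
    have := hS'.posSemidef.mul_mul_conjTranspose_same (Kt - K)
    rwa [conjTranspose_eq_transpose_of_trivial] at this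
  have hSigt' : Sigt.PosDef := by rw [hG]; exact hSig'.add_posSemidef hGPSD
  have hSigtdet : IsUnit Sigt.det := isUnit_iff_ne_zero.mpr (ne_of_gt hSigt'.det_pos)
  have hSigts : Sigtᵀ = Sigt := by
    rw [← conjTranspose_eq_transpose_of_trivial]; exact hSigt'.isHermitian
  have hSigtis : (Sigt⁻¹)ᵀ = Sigt⁻¹ := by rw [transpose_nonsing_inv, hSigts]
  have hGs : ((Kt - K) * S * (Kt - K)ᵀ)ᵀ = (Kt - K) * S * (Kt - K)ᵀ := by
    rw [transpose_mul, transpose_mul, transpose_transpose, hSs, Matrix.mul_assoc]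
  have hAs : (Sig⁻¹ - Sigt⁻¹)ᵀ = Sig⁻¹ - Sigt⁻¹ := by
    rw [transpose_sub, hSigis, hSigtis]
  have hAdec : Sig⁻¹ - Sigt⁻¹
      = Sigt⁻¹ * ((Kt - K) * S * (Kt - K)ᵀ) * Sigt⁻¹
        + (Sig⁻¹ - Sigt⁻¹) * Sig * (Sig⁻¹ - Sigt⁻¹) := by
    have hGalt : (Kt - K) * S * (Kt - K)ᵀ = Sigt - Sig := by rw [hG]; abel
    rw [hGalt]
    simp only [Matrix.mul_sub, Matrix.sub_mul, Matrix.mul_assoc]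
    rw [mul_nonsing_inv Sig hSigdet]
    simp only [Matrix.mul_one]
    rw [← Matrix.mul_assoc Sigt⁻¹ Sigt Sigt⁻¹, nonsing_inv_mul Sigt hSigtdet, Matrix.one_mul]
    rw [← Matrix.mul_assoc Sig⁻¹ Sig Sigt⁻¹, nonsing_inv_mul Sig hSigdet, Matrix.one_mul]
    abel
  have hAPSD : (Sig⁻¹ - Sigt⁻¹).PosSemidef := by
    rw [hAdec]
    have h1 : (Sigt⁻¹ * ((Kt - K) * S * (Kt - K)ᵀ) * Sigt⁻¹).PosSemidef := by
      have := hGPSD.mul_mul_conjTranspose_same Sigt⁻¹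
      rwa [conjTranspose_eq_transpose_of_trivial, hSigtis] at this
    have h2 : ((Sig⁻¹ - Sigt⁻¹) * Sig * (Sig⁻¹ - Sigt⁻¹)).PosSemidef := by
      have := hSig'.posSemidef.mul_mul_conjTranspose_same (Sig⁻¹ - Sigt⁻¹)
      rwa [conjTranspose_eq_transpose_of_trivial, hAs] at this
    exact h1.add h2
  have hASigG : (Sig⁻¹ - Sigt⁻¹) * Sig = Sigt⁻¹ * ((Kt - K) * S * (Kt - K)ᵀ) := by
    have hGalt : (Kt - K) * S * (Kt - K)ᵀ = Sigt - Sig := by rw [hG]; abel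
    rw [hGalt, Matrix.mul_sub, Matrix.sub_mul, nonsing_inv_mul Sig hSigdet,
      nonsing_inv_mul Sigt hSigtdet]
  have hSigSigt : Sig * Sigt⁻¹ = 1 - ((Kt - K) * S * (Kt - K)ᵀ) * Sigt⁻¹ := by
    have hGalt : (Kt - K) * S * (Kt - K)ᵀ = Sigt - Sig := by rw [hG]; abel
    rw [hGalt, Matrix.sub_mul, mul_nonsing_inv Sigt hSigtdet]
    abel
  ----------------------------------------------------------------
  -- vector part
  set e : Fin m → ℝ := y - H.mulVec z with he
  obtain ⟨M, hM⟩ : ∃ M, ((Kt - K) * S * (Kt - K)ᵀ).mulVec M = (Kt - K) *ᵥ e := by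
    apply exists_mulVec_eq' _ hGs
    intro v hv
    have h0 : (Kt - K)ᵀ *ᵥ v = 0 := by
      by_contra hne
      have hpos := hS'.dotProduct_mulVec_pos hne
      have hx : v ⬝ᵥ (((Kt - K) * S * (Kt - K)ᵀ) *ᵥ v)
          = ((Kt - K)ᵀ *ᵥ v) ⬝ᵥ (S *ᵥ ((Kt - K)ᵀ *ᵥ v)) := by
        rw [← Matrix.mulVec_mulVec, ← Matrix.mulVec_mulVec, dotProduct_comm,
          mulVec_dot', dotProduct_comm]
      rw [hv] at hx
      simp only [dotProduct_zero] at hx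
      simp only [star_trivial] at hpos
      linarith
    rw [mulVec_dot', h0, dotProduct_zero]
  set μ : Fin d → ℝ := z + K.mulVec e with hμ
  set mt : Fin d → ℝ := z + Kt.mulVec e with hmt
  set w0 : Fin d → ℝ := Sig.mulVec M with hw0
  refine ⟨hAPSD, ⟨μ - w0, ?_⟩⟩
  -- key scalar identity I
  have hIdI : ∀ x : Fin d → ℝ,
      (y - H *ᵥ x) ⬝ᵥ R⁻¹ *ᵥ (y - H *ᵥ x) + (x - z) ⬝ᵥ Q⁻¹ *ᵥ (x - z)
      = (x - μ) ⬝ᵥ Sig⁻¹ *ᵥ (x - μ) + e ⬝ᵥ S⁻¹ *ᵥ e := by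
    intro x
    have hyx : y - H *ᵥ x = e - H *ᵥ (x - z) := by
      rw [he, Matrix.mulVec_sub]; abel
    have hxμ : x - μ = (x - z) - K *ᵥ e := by rw [hμ]; abel
    rw [hyx, hxμ]
    set v := x - z with hv
    have t1 : (H *ᵥ v) ⬝ᵥ R⁻¹ *ᵥ (H *ᵥ v) = v ⬝ᵥ Sig⁻¹ *ᵥ v - v ⬝ᵥ Q⁻¹ *ᵥ v := by
      have hHRH : Hᵀ * R⁻¹ * H = Sig⁻¹ - Q⁻¹ := by rw [hSigInv]; abel
      rw [mulVec_dot', Matrix.mulVec_mulVec, Matrix.mulVec_mulVec, hHRH,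
        Matrix.sub_mulVec, dotProduct_sub]
    have t3 : (H *ᵥ v) ⬝ᵥ R⁻¹ *ᵥ e = v ⬝ᵥ Sig⁻¹ *ᵥ (K *ᵥ e) := by
      rw [mulVec_dot', Matrix.mulVec_mulVec, hSinvK.symm, ← Matrix.mulVec_mulVec]
    have t2 : e ⬝ᵥ R⁻¹ *ᵥ (H *ᵥ v) = v ⬝ᵥ Sig⁻¹ *ᵥ (K *ᵥ e) := by
      rw [dotProduct_comm, mulVec_dot', hRis, t3]
    have t4 : (K *ᵥ e) ⬝ᵥ Sig⁻¹ *ᵥ (K *ᵥ e) = e ⬝ᵥ R⁻¹ *ᵥ e - e ⬝ᵥ S⁻¹ *ᵥ e := by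
      rw [mulVec_dot', Matrix.mulVec_mulVec, Matrix.mulVec_mulVec, hKSK,
        Matrix.sub_mulVec, dotProduct_sub]
    have t5 : (K *ᵥ e) ⬝ᵥ Sig⁻¹ *ᵥ v = v ⬝ᵥ Sig⁻¹ *ᵥ (K *ᵥ e) := by
      rw [dotProduct_comm, mulVec_dot', hSigis]
    simp only [Matrix.mulVec_sub, dotProduct_sub, sub_dotProduct]
    linarith [t1, t2, t3, t4, t5]
  -- key scalar identity II
  have hIdII : ∀ x : Fin d → ℝ,
      (x - μ) ⬝ᵥ Sig⁻¹ *ᵥ (x - μ) - (x - mt) ⬝ᵥ Sigt⁻¹ *ᵥ (x - mt)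
      = (x - (μ - w0)) ⬝ᵥ (Sig⁻¹ - Sigt⁻¹) *ᵥ (x - (μ - w0))
        - M ⬝ᵥ ((Kt - K) *ᵥ e) := by
    intro x
    have hxmt : x - mt = (x - μ) - (Kt - K) *ᵥ e := by
      rw [hmt, hμ, Matrix.sub_mulVec]; abel
    have hxu : x - (μ - w0) = (x - μ) + w0 := by abel
    rw [hxmt, hxu]
    set v := x - μ with hv
    set De := (Kt - K) *ᵥ e with hDe
    have s2 : (Sig⁻¹ - Sigt⁻¹) *ᵥ w0 = Sigt⁻¹ *ᵥ De := by
      rw [hw0, Matrix.mulVec_mulVec, hASigG, ← Matrix.mulVec_mulVec, hM]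
    have s3 : v ⬝ᵥ (Sig⁻¹ - Sigt⁻¹) *ᵥ w0 = v ⬝ᵥ Sigt⁻¹ *ᵥ De := by rw [s2]
    have s4 : w0 ⬝ᵥ (Sig⁻¹ - Sigt⁻¹) *ᵥ v = v ⬝ᵥ Sigt⁻¹ *ᵥ De := by
      rw [dotProduct_comm, mulVec_dot', hAs, s2]
    have s6 : w0 ⬝ᵥ (Sig⁻¹ - Sigt⁻¹) *ᵥ w0 = w0 ⬝ᵥ Sigt⁻¹ *ᵥ De := by rw [s2]
    have s5 : De ⬝ᵥ Sigt⁻¹ *ᵥ v = v ⬝ᵥ Sigt⁻¹ *ᵥ De := by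
      rw [dotProduct_comm, mulVec_dot', hSigtis]
    have s8 : M ⬝ᵥ ((Kt - K) * S * (Kt - K)ᵀ) *ᵥ (Sigt⁻¹ *ᵥ De) = De ⬝ᵥ Sigt⁻¹ *ᵥ De := by
      rw [dotProduct_comm, mulVec_dot', hGs, hM]
      rw [dotProduct_comm]
    have s7 : w0 ⬝ᵥ Sigt⁻¹ *ᵥ De = M ⬝ᵥ De - De ⬝ᵥ Sigt⁻¹ *ᵥ De := by
      rw [hw0, mulVec_dot', hSigs, Matrix.mulVec_mulVec, hSigSigt, Matrix.sub_mulVec,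
        Matrix.one_mulVec, dotProduct_sub, ← Matrix.mulVec_mulVec, s8]
    have s3' : v ⬝ᵥ Sig⁻¹ *ᵥ w0 - v ⬝ᵥ Sigt⁻¹ *ᵥ w0 = v ⬝ᵥ Sigt⁻¹ *ᵥ De := by
      simpa only [Matrix.sub_mulVec, dotProduct_sub] using s3
    have s4' : w0 ⬝ᵥ Sig⁻¹ *ᵥ v - w0 ⬝ᵥ Sigt⁻¹ *ᵥ v = v ⬝ᵥ Sigt⁻¹ *ᵥ De := by
      simpa only [Matrix.sub_mulVec, dotProduct_sub] using s4
    have s6' : w0 ⬝ᵥ Sig⁻¹ *ᵥ w0 - w0 ⬝ᵥ Sigt⁻¹ *ᵥ w0 = w0 ⬝ᵥ Sigt⁻¹ *ᵥ De := by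
      simpa only [Matrix.sub_mulVec, dotProduct_sub] using s6
    simp only [Matrix.sub_mulVec, Matrix.mulVec_add, Matrix.mulVec_sub,
      dotProduct_sub, dotProduct_add, sub_dotProduct, add_dotProduct]
    linarith [s3', s4', s5, s6', s7]
  -- nonnegativity of the constant
  have hc0 : 0 ≤ e ⬝ᵥ S⁻¹ *ᵥ e - M ⬝ᵥ ((Kt - K) *ᵥ e) := by
    set w : Fin m → ℝ := (Kt - K)ᵀ *ᵥ M with hw
    have u1 : M ⬝ᵥ ((Kt - K) *ᵥ e) = w ⬝ᵥ e := by
      rw [dotProduct_comm M, mulVec_dot', ← hw, dotProduct_comm]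
    have hD0 : (Kt - K) *ᵥ (S *ᵥ w) = (Kt - K) *ᵥ e := by
      rw [hw, Matrix.mulVec_mulVec, Matrix.mulVec_mulVec, hM]
    have u2 : w ⬝ᵥ S *ᵥ w = w ⬝ᵥ e := by
      have h : M ⬝ᵥ ((Kt - K) *ᵥ (S *ᵥ w - e)) = 0 := by
        rw [Matrix.mulVec_sub, sub_eq_zero.mpr hD0, dotProduct_zero]
      rw [dotProduct_comm M, mulVec_dot', ← hw, sub_dotProduct, mulVec_dot' S w w] at h
      rw [hSs] at h
      have := dotProduct_comm e w
      linarith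
    have r1 : S⁻¹ *ᵥ (S *ᵥ w) = w := by
      rw [Matrix.mulVec_mulVec, nonsing_inv_mul S hSdet, Matrix.one_mulVec]
    have r2 : (S *ᵥ w) ⬝ᵥ S⁻¹ *ᵥ e = w ⬝ᵥ e := by
      rw [mulVec_dot', hSs, Matrix.mulVec_mulVec, mul_nonsing_inv S hSdet, Matrix.one_mulVec]
    have r3 : e ⬝ᵥ S⁻¹ *ᵥ (S *ᵥ w) = w ⬝ᵥ e := by
      rw [r1, dotProduct_comm]
    have r4 : (S *ᵥ w) ⬝ᵥ S⁻¹ *ᵥ (S *ᵥ w) = w ⬝ᵥ e := by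
      rw [r1, mulVec_dot', hSs, u2]
    have u3 : e ⬝ᵥ S⁻¹ *ᵥ e - w ⬝ᵥ e = (e - S *ᵥ w) ⬝ᵥ S⁻¹ *ᵥ (e - S *ᵥ w) := by
      simp only [Matrix.mulVec_sub, dotProduct_sub, sub_dotProduct]
      linarith [r2, r3, r4]
    have u4 : 0 ≤ (e - S *ᵥ w) ⬝ᵥ S⁻¹ *ᵥ (e - S *ᵥ w) := by
      have := hS'.inv.posSemidef.dotProduct_mulVec_nonneg (e - S *ᵥ w)
      simpa using this
    rw [u1]
    linarith [u3, u4]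
  -- final assembly
  intro x
  rw [hptar x, hqprop x]
  simp only [gaussDensity]
  have hP : (0:ℝ) < (2 * Real.pi) ^ (-(d : ℝ) / 2) :=
    Real.rpow_pos_of_pos (by positivity) _
  have ha : (0:ℝ) < Q.det := hQ.det_pos
  have hb : (0:ℝ) < Sigt.det := hSigt'.det_pos
  have hbp : (0:ℝ) < Sigt.det ^ (-(1:ℝ)/2) := Real.rpow_pos_of_pos hb _
  have hap : (0:ℝ) < Q.det ^ (-(1:ℝ)/2) := Real.rpow_pos_of_pos ha _
  have hqpos : 0 < (2 * Real.pi) ^ (-(d : ℝ) / 2) * Sigt.det ^ (-(1:ℝ)/2) *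
      Real.exp (-(1 / 2) * ((x - mt) ⬝ᵥ Sigt⁻¹ *ᵥ (x - mt))) :=
    mul_pos (mul_pos hP hbp) (Real.exp_pos _)
  rw [div_le_iff₀ hqpos]
  have hE : -(1 / 2) * ((y - H *ᵥ x) ⬝ᵥ R⁻¹ *ᵥ (y - H *ᵥ x))
        + -(1 / 2) * ((x - z) ⬝ᵥ Q⁻¹ *ᵥ (x - z))
      ≤ -(1 / 2) * ((x - (μ - w0)) ⬝ᵥ (Sig⁻¹ - Sigt⁻¹) *ᵥ (x - (μ - w0)))
        + -(1 / 2) * ((x - mt) ⬝ᵥ Sigt⁻¹ *ᵥ (x - mt)) := by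
    have h1 := hIdI x
    have h2 := hIdII x
    linarith [hc0]
  have key : Real.exp (-(1 / 2) * ((y - H *ᵥ x) ⬝ᵥ R⁻¹ *ᵥ (y - H *ᵥ x)))
        * Real.exp (-(1 / 2) * ((x - z) ⬝ᵥ Q⁻¹ *ᵥ (x - z)))
      ≤ Real.exp (-(1 / 2) * ((x - (μ - w0)) ⬝ᵥ (Sig⁻¹ - Sigt⁻¹) *ᵥ (x - (μ - w0))))
        * Real.exp (-(1 / 2) * ((x - mt) ⬝ᵥ Sigt⁻¹ *ᵥ (x - mt))) := by
    rw [← Real.exp_add, ← Real.exp_add]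
    exact Real.exp_le_exp.mpr hE
  have hc : (Sigt.det / Q.det) ^ ((1:ℝ)/2) * Sigt.det ^ (-(1:ℝ)/2)
      = Q.det ^ (-(1:ℝ)/2) := by
    have hhalf : (-(1:ℝ)/2) = -((1:ℝ)/2) := by norm_num
    rw [hhalf, Real.div_rpow hb.le ha.le, Real.rpow_neg hb.le, Real.rpow_neg ha.le]
    have h1 : Sigt.det ^ ((1:ℝ)/2) ≠ 0 := (Real.rpow_pos_of_pos hb _).ne'
    have h2 : Q.det ^ ((1:ℝ)/2) ≠ 0 := (Real.rpow_pos_of_pos ha _).ne'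
    field_simp
  calc Real.exp (-(1 / 2) * ((y - H *ᵥ x) ⬝ᵥ R⁻¹ *ᵥ (y - H *ᵥ x)))
        * ((2 * Real.pi) ^ (-(d : ℝ) / 2) * Q.det ^ (-(1:ℝ)/2)
          * Real.exp (-(1 / 2) * ((x - z) ⬝ᵥ Q⁻¹ *ᵥ (x - z))))
      = (2 * Real.pi) ^ (-(d : ℝ) / 2) * Q.det ^ (-(1:ℝ)/2)
        * (Real.exp (-(1 / 2) * ((y - H *ᵥ x) ⬝ᵥ R⁻¹ *ᵥ (y - H *ᵥ x)))
          * Real.exp (-(1 / 2) * ((x - z) ⬝ᵥ Q⁻¹ *ᵥ (x - z)))) := by ring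
    _ ≤ (2 * Real.pi) ^ (-(d : ℝ) / 2) * Q.det ^ (-(1:ℝ)/2)
        * (Real.exp (-(1 / 2) * ((x - (μ - w0)) ⬝ᵥ (Sig⁻¹ - Sigt⁻¹) *ᵥ (x - (μ - w0))))
          * Real.exp (-(1 / 2) * ((x - mt) ⬝ᵥ Sigt⁻¹ *ᵥ (x - mt)))) := by
        exact mul_le_mul_of_nonneg_left key (mul_pos hP hap).le
    _ = (Sigt.det / Q.det) ^ ((1:ℝ)/2)
        * Real.exp (-(1 / 2) * ((x - (μ - w0)) ⬝ᵥ (Sig⁻¹ - Sigt⁻¹) *ᵥ (x - (μ - w0))))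
        * ((2 * Real.pi) ^ (-(d : ℝ) / 2) * Sigt.det ^ (-(1:ℝ)/2)
          * Real.exp (-(1 / 2) * ((x - mt) ⬝ᵥ Sigt⁻¹ *ᵥ (x - mt)))) := by
        rw [← hc]; ring
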